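/- A non-zero linear map α : sl(2,ℂ) → sl(2,ℂ) is a Lie bialgebra morphism (commuting with both the bracket and the standard cobracket) if and only if α(H) = H, α(X₊) = b·X₊, and α(X₋) = b⁻¹·X₋ for some non-zero complex number b. -/

import Mathlib

open TensorProduct

variable {k : Type*} [Field k]
variable {L : Type*} [AddCommGroup L] [Module k L]

/-- `[r₁₂, s₁₃]` -/
noncomputable def c1213 (β : L →ₗ[k] L →ₗ[k] L) (α : L →ₗ[k] L) :
    (L ⊗[k] L) ⊗[k] (L ⊗[k] L) →ₗ[k] L ⊗[k] (L ⊗[k] L) :=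
  (TensorProduct.map (TensorProduct.lift β) (TensorProduct.map α α)) ∘ₗ
    (TensorProduct.tensorTensorTensorComm k L L L L).toLinearMap

/-- `[r₁₂, s₂₃]` -/
noncomputable def c1223 (β : L →ₗ[k] L →ₗ[k] L) (α : L →ₗ[k] L) :
    (L ⊗[k] L) ⊗[k] (L ⊗[k] L) →ₗ[k] L ⊗[k] (L ⊗[k] L) :=
  (TensorProduct.map α ((TensorProduct.map (TensorProduct.lift β) α) ∘ₗ
      (TensorProduct.assoc k L L L).symm.toLinearMap)) ∘ₗ
    (TensorProduct.assoc k L L (L ⊗[k] L)).toLinearMap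

/-- `[r₁₃, s₂₃]` -/
noncomputable def c1323 (β : L →ₗ[k] L →ₗ[k] L) (α : L →ₗ[k] L) :
    (L ⊗[k] L) ⊗[k] (L ⊗[k] L) →ₗ[k] L ⊗[k] (L ⊗[k] L) :=
  (TensorProduct.assoc k L L L).toLinearMap ∘ₗ
    (TensorProduct.map (TensorProduct.map α α) (TensorProduct.lift β)) ∘ₗ
    (TensorProduct.tensorTensorTensorComm k L L L L).toLinearMap

/-- `[[r,s]]^α = [r₁₂,s₁₃] + [r₁₂,s₂₃] + [r₁₃,s₂₃]` -/
noncomputable def chybe (β : L →ₗ[k] L →ₗ[k] L) (α : L →ₗ[k] L) (r s : L ⊗[k] L) :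
    L ⊗[k] (L ⊗[k] L) :=
  c1213 β α (r ⊗ₜ s) + c1223 β α (r ⊗ₜ s) + c1323 β α (r ⊗ₜ s)

/-- `ad_x` on `L ⊗ L`. -/
noncomputable def adT2 (β : L →ₗ[k] L →ₗ[k] L) (α : L →ₗ[k] L) (x : L) :
    L ⊗[k] L →ₗ[k] L ⊗[k] L :=
  TensorProduct.map (β x) α + TensorProduct.map α (β x)

/-- `ad_x` on `L ⊗ L ⊗ L`. -/
noncomputable def adT3 (β : L →ₗ[k] L →ₗ[k] L) (α : L →ₗ[k] L) (x : L) :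
    L ⊗[k] (L ⊗[k] L) →ₗ[k] L ⊗[k] (L ⊗[k] L) :=
  TensorProduct.map (β x) (TensorProduct.map α α) +
    TensorProduct.map α (TensorProduct.map (β x) α) +
    TensorProduct.map α (TensorProduct.map α (β x))

/-- the cyclic permutation on `L ⊗ L ⊗ L`, `x⊗y⊗z ↦ z⊗x⊗y`. -/
noncomputable def cyc : L ⊗[k] (L ⊗[k] L) →ₗ[k] L ⊗[k] (L ⊗[k] L) :=
  (TensorProduct.comm k (L ⊗[k] L) L).toLinearMap ∘ₗ
    (TensorProduct.assoc k L L L).symm.toLinearMap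

/-- the cyclic sum `↻` on `L ⊗ L ⊗ L`. -/
noncomputable def cycSum : L ⊗[k] (L ⊗[k] L) →ₗ[k] L ⊗[k] (L ⊗[k] L) :=
  LinearMap.id + cyc + cyc ∘ₗ cyc

/-- `Δ = ad(r) : x ↦ ad_x(r)` as a linear map. -/
noncomputable def adr (β : L →ₗ[k] L →ₗ[k] L) (α : L →ₗ[k] L) (r : L ⊗[k] L) :
    L →ₗ[k] L ⊗[k] L where
  toFun x := adT2 β α x r
  map_add' x y := by
    simp only [adT2, map_add, TensorProduct.map_add_left, TensorProduct.map_add_right,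
      LinearMap.add_apply]
    abel
  map_smul' c x := by
    simp only [adT2, map_smul, TensorProduct.map_smul_left, TensorProduct.map_smul_right,
      LinearMap.add_apply, LinearMap.smul_apply, RingHom.id_apply, smul_add]

/-- Hom-Lie algebra axioms. -/
def IsHomLie (β : L →ₗ[k] L →ₗ[k] L) (α : L →ₗ[k] L) : Prop :=
  (∀ x y, β x y = - β y x) ∧
  (∀ x y, α (β x y) = β (α x) (α y)) ∧
  (∀ x y z, β (β x y) (α z) + β (β z x) (α y) + β (β y z) (α x) = 0)

/-- Hom-Lie coalgebra axioms. -/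
def IsHomLieCoalg (Δ : L →ₗ[k] L ⊗[k] L) (α : L →ₗ[k] L) : Prop :=
  (∀ x, Δ (α x) = TensorProduct.map α α (Δ x)) ∧
  (∀ x, TensorProduct.comm k L L (Δ x) = - Δ x) ∧
  (∀ x, cycSum (TensorProduct.map α Δ (Δ x)) = 0)

/-- Hom-Lie bialgebra axioms. -/
def IsHomLieBialg (β : L →ₗ[k] L →ₗ[k] L) (Δ : L →ₗ[k] L ⊗[k] L) (α : L →ₗ[k] L) : Prop :=
  IsHomLie β α ∧ IsHomLieCoalg Δ α ∧
  (∀ x y, Δ (β x y) = adT2 β α (α x) (Δ y) - adT2 β α (α y) (Δ x))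

/-! ### `sl(2,ℂ)` realized on `Fin 3 → ℂ` with basis `H = e₀`, `X₊ = e₁`, `X₋ = e₂`. -/

/-- `H`. -/
noncomputable def slH : Fin 3 → ℂ := Pi.single 0 1
/-- `X₊`. -/
noncomputable def slXp : Fin 3 → ℂ := Pi.single 1 1
/-- `X₋`. -/
noncomputable def slXm : Fin 3 → ℂ := Pi.single 2 1

/-- the `sl(2)` bracket: `[X₊,X₋] = H`, `[H,X₊] = 2X₊`, `[H,X₋] = -2X₋`-/
noncomputable def slBr : (Fin 3 → ℂ) →ₗ[ℂ] (Fin 3 → ℂ) →ₗ[ℂ] (Fin 3 → ℂ) :=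
  LinearMap.mk₂ ℂ
    (fun u v => ![u 1 * v 2 - u 2 * v 1, 2 * (u 0 * v 1 - u 1 * v 0),
      -2 * (u 0 * v 2 - u 2 * v 0)])
    (by intro u u' v; funext i; fin_cases i <;> simp <;> ring)
    (by intro c u v; funext i; fin_cases i <;> simp <;> ring)
    (by intro u v v'; funext i; fin_cases i <;> simp <;> ring)
    (by intro c u v; funext i; fin_cases i <;> simp <;> ring)

/-- the standard cobracket of `sl(2)`: `Δ(H) = 0`, `Δ(X±) = (1/2)(X± ⊗ H − H ⊗ X±)`. -/
noncomputable def slCobr : (Fin 3 → ℂ) →ₗ[ℂ] (Fin 3 → ℂ) ⊗[ℂ] (Fin 3 → ℂ) :=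
  (Pi.basisFun ℂ (Fin 3)).constr ℂ
    ![0, (1 / 2 : ℂ) • (slXp ⊗ₜ slH - slH ⊗ₜ slXp),
      (1 / 2 : ℂ) • (slXm ⊗ₜ slH - slH ⊗ₜ slXm)]

/-- the Lie bialgebra endomorphism of `sl(2)` determined by `b`:
`α(H) = H`, `α(X₊) = b X₊`, `α(X₋) = b⁻¹ X₋`. -/
noncomputable def slAlpha (b : ℂ) : (Fin 3 → ℂ) →ₗ[ℂ] (Fin 3 → ℂ) :=
  (Pi.basisFun ℂ (Fin 3)).constr ℂ ![slH, b • slXp, b⁻¹ • slXm]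

/-- the standard classical `r`-matrix `r = X₊ ⊗ X₋ + (1/4) H ⊗ H` of `sl(2)`. -/
noncomputable def slR : (Fin 3 → ℂ) ⊗[ℂ] (Fin 3 → ℂ) :=
  slXp ⊗ₜ slXm + (1 / 4 : ℂ) • (slH ⊗ₜ slH)


section Helpers
lemma expand3 (x : Fin 3 → ℂ) : x = x 0 • slH + x 1 • slXp + x 2 • slXm := by
  funext i; fin_cases i <;> simp [slH, slXp, slXm]

lemma cobr_apply (x : Fin 3 → ℂ) : slCobr x =
    x 1 • ((1/2 : ℂ) • (slXp ⊗ₜ slH - slH ⊗ₜ slXp)) +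
    x 2 • ((1/2 : ℂ) • (slXm ⊗ₜ slH - slH ⊗ₜ slXm)) := by
  simp [slCobr, Module.Basis.constr_apply_fintype, Fin.sum_univ_three]

noncomputable def φ (i j : Fin 3) : (Fin 3 → ℂ) ⊗[ℂ] (Fin 3 → ℂ) →ₗ[ℂ] ℂ :=
  TensorProduct.lift ((LinearMap.mul ℂ ℂ).compl₁₂ (LinearMap.proj i) (LinearMap.proj j))

@[simp] lemma φ_tmul (i j : Fin 3) (u v : Fin 3 → ℂ) : φ i j (u ⊗ₜ v) = u i * v j := by
  simp [φ]

@[simp] lemma slH_c0 : slH 0 = 1 := by simp [slH]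
@[simp] lemma slH_c1 : slH 1 = 0 := by simp [slH]
@[simp] lemma slH_c2 : slH 2 = 0 := by simp [slH]
@[simp] lemma slXp_c0 : slXp 0 = 0 := by simp [slXp]
@[simp] lemma slXp_c1 : slXp 1 = 1 := by simp [slXp]
@[simp] lemma slXp_c2 : slXp 2 = 0 := by simp [slXp]
@[simp] lemma slXm_c0 : slXm 0 = 0 := by simp [slXm]
@[simp] lemma slXm_c1 : slXm 1 = 0 := by simp [slXm]
@[simp] lemma slXm_c2 : slXm 2 = 1 := by simp [slXm]

lemma slBr_apply (u v : Fin 3 → ℂ) : slBr u v =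
    ![u 1 * v 2 - u 2 * v 1, 2 * (u 0 * v 1 - u 1 * v 0), -2 * (u 0 * v 2 - u 2 * v 0)] := by
  simp [slBr]

end Helpers

/-- the non-zero Lie bialgebra endomorphisms of `sl(2,ℂ)` are exactly
`α(H) = H`, `α(X₊) = b X₊`, `α(X₋) = b⁻¹ X₋` for `b ≠ 0`. -/
theorem stmt3 (α : (Fin 3 → ℂ) →ₗ[ℂ] (Fin 3 → ℂ)) (hα : α ≠ 0) :
    ((∀ x y, α (slBr x y) = slBr (α x) (α y)) ∧
      (∀ x, slCobr (α x) = TensorProduct.map α α (slCobr x)))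
    ↔ ∃ b : ℂ, b ≠ 0 ∧ α slH = slH ∧ α slXp = b • slXp ∧ α slXm = b⁻¹ • slXm := by
  constructor
  · rintro ⟨h1, h2⟩
    have cH : slCobr slH = 0 := by rw [cobr_apply]; simp [slH]
    have eq1 : slCobr (α slH) = 0 := by rw [h2 slH, cH, map_zero]
    have hA1 : α slH 1 = 0 := by
      have h := congrArg (φ 1 0) eq1
      rw [cobr_apply] at h
      simpa using h
    have hA2 : α slH 2 = 0 := by
      have h := congrArg (φ 2 0) eq1
      rw [cobr_apply] at h
      simpa using h
    have ebp : slBr slH slXp = (2:ℂ) • slXp := by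
      funext i; fin_cases i <;> simp [slBr_apply, slH, slXp]
    have ebm : slBr slH slXm = (-2:ℂ) • slXm := by
      funext i; fin_cases i <;> simp [slBr_apply, slH, slXm]
    have ebpm : slBr slXp slXm = slH := by
      funext i; fin_cases i <;> simp [slBr_apply, slH, slXp, slXm]
    have hbp := h1 slH slXp
    rw [ebp, map_smul] at hbp
    have hbm := h1 slH slXm
    rw [ebm, map_smul] at hbm
    have hbpm := h1 slXp slXm
    rw [ebpm] at hbpm
    have P0 : α slXp 0 = 0 := by
      have h := congrFun hbp 0
      simp [slBr_apply, hA1, hA2] at h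
      exact h
    have P1eq : α slXp 1 = α slH 0 * α slXp 1 := by
      have h := congrFun hbp 1
      simp [slBr_apply, hA1] at h
      exact h
    have P2eq : α slXp 2 = - (α slH 0 * α slXp 2) := by
      have h := congrFun hbp 2
      simp [slBr_apply, hA2] at h
      linear_combination h / 2
    have M0 : α slXm 0 = 0 := by
      have h := congrFun hbm 0
      simp [slBr_apply, hA1, hA2] at h
      exact h
    have M1eq : α slXm 1 = - (α slH 0 * α slXm 1) := by
      have h := congrFun hbm 1
      simp [slBr_apply, hA1] at h
      linear_combination - h / 2
    have M2eq : α slXm 2 = α slH 0 * α slXm 2 := by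
      have h := congrFun hbm 2
      simp [slBr_apply, hA2] at h
      exact h
    have T : α slH 0 = α slXp 1 * α slXm 2 - α slXp 2 * α slXm 1 := by
      have h := congrFun hbpm 0
      simpa [slBr_apply] using h
    -- cobracket on X+, extract (2,0) component
    have cXp : slCobr slXp = (1/2 : ℂ) • (slXp ⊗ₜ slH - slH ⊗ₜ slXp) := by
      rw [cobr_apply]; simp [slXp]
    have cXm : slCobr slXm = (1/2 : ℂ) • (slXm ⊗ₜ slH - slH ⊗ₜ slXm) := by
      rw [cobr_apply]; simp [slXm]
    have P2eq2 : α slXp 2 = α slH 0 * α slXp 2 := by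
      have h := congrArg (φ 2 0) (h2 slXp)
      rw [cobr_apply (α slXp), cXp] at h
      simp [P0, hA2] at h
      linear_combination 2 * h
    have M1eq2 : α slXm 1 = α slH 0 * α slXm 1 := by
      have h := congrArg (φ 1 0) (h2 slXm)
      rw [cobr_apply (α slXm), cXm] at h
      simp [M0, hA1] at h
      linear_combination 2 * h
    have P2 : α slXp 2 = 0 := by linear_combination (P2eq + P2eq2) / 2
    have M1 : α slXm 1 = 0 := by linear_combination (M1eq + M1eq2) / 2
    have T' : α slH 0 = α slXp 1 * α slXm 2 := by rw [T, P2]; ring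
    by_cases ht : α slH 0 = 0
    · exfalso
      have p1 : α slXp 1 = 0 := by rw [P1eq, ht]; ring
      have m2 : α slXm 2 = 0 := by rw [M2eq, ht]; ring
      have zH : α slH = 0 := by
        funext i; fin_cases i <;> simp [ht, hA1, hA2]
      have zP : α slXp = 0 := by
        funext i; fin_cases i <;> simp [P0, p1, P2]
      have zM : α slXm = 0 := by
        funext i; fin_cases i <;> simp [M0, M1, m2]
      apply hα
      apply LinearMap.ext
      intro x
      rw [show α x = x 0 • α slH + x 1 • α slXp + x 2 • α slXm by
        conv_lhs => rw [expand3 x]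
        simp]
      simp [zH, zP, zM]
    · have p1ne : α slXp 1 ≠ 0 := by
        intro h0
        apply ht; rw [T', h0]; ring
      have t1 : α slH 0 = 1 := by
        have hz : (α slH 0 - 1) * α slXp 1 = 0 := by linear_combination - P1eq
        rcases mul_eq_zero.mp hz with h | h
        · linear_combination h
        · exact absurd h p1ne
      have hprod : α slXp 1 * α slXm 2 = 1 := by rw [← T', t1]
      have hm2 : α slXm 2 = (α slXp 1)⁻¹ := eq_inv_of_mul_eq_one_right hprod
      refine ⟨α slXp 1, p1ne, ?_, ?_, ?_⟩
      · funext i; fin_cases i <;> simp [t1, hA1, hA2]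
      · funext i; fin_cases i <;> simp [P0, P2]
      · funext i; fin_cases i <;> simp [M0, M1, hm2]
  · rintro ⟨b, hb, hH, hP, hM⟩
    have hαx : ∀ x : Fin 3 → ℂ, α x = ![x 0, b * x 1, b⁻¹ * x 2] := by
      intro x
      conv_lhs => rw [expand3 x]
      rw [map_add, map_add, map_smul, map_smul, map_smul, hH, hP, hM]
      funext i; fin_cases i <;> simp [slH, slXp, slXm, mul_comm]
    constructor
    · intro x y
      funext i
      fin_cases i
      · simp [hαx, slBr_apply]
        linear_combination (x 2 * y 1 - x 1 * y 2) * mul_inv_cancel₀ hb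
      · simp [hαx, slBr_apply]; ring
      · simp [hαx, slBr_apply]; ring
    · intro x
      rw [cobr_apply x, cobr_apply (α x), hαx x]
      simp only [map_add, map_smul, TensorProduct.map_tmul, map_sub, hH, hP, hM,
        ← TensorProduct.smul_tmul', TensorProduct.tmul_smul, smul_smul,
        Matrix.cons_val_one, Matrix.cons_val_two, Matrix.cons_val_zero, Matrix.head_cons, Matrix.tail_cons]
      module
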